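/- arXiv:2602.19483 — 2 statements merged into one kernel-verified Lean document; each statement's English description precedes it below -/
import Mathlib

section
/- Let V₁,…,Vₙ and V be exchangeable real random variables (e.g. i.i.d.). Define q̂ as the ⌈(1−α)(n+1)⌉-th smallest value among V₁,…,Vₙ (with q̂ = +∞ if ⌈(1−α)(n+1)⌉ > n). Then P(V ≤ q̂) ≥ 1 − α. -/
open MeasureTheory ProbabilityTheory

lemma card_filter_perm {m : ℕ} (σ : Equiv.Perm (Fin m)) (p : Fin m → Prop) [DecidablePred p] :
    (Finset.univ.filter fun i => p (σ i)).card = (Finset.univ.filter p).card := by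
  refine Finset.card_nbij (i := σ) ?_ ?_ ?_
  · intro l hl
    simp only [Finset.coe_filter, Set.mem_setOf_eq, Finset.mem_univ, true_and,
      Finset.mem_coe, Finset.mem_filter] at hl ⊢
    exact hl
  · exact Set.injOn_of_injective σ.injective
  · intro l hl
    simp only [Finset.coe_filter, Set.mem_setOf_eq, Finset.mem_univ, true_and,
      Set.mem_image] at hl ⊢
    exact ⟨σ.symm l, by simpa using hl, by simp⟩

lemma rank_count_lemma {m k : ℕ} (x : Fin m → ℝ) (hk : k ≤ m) :
    k ≤ (Finset.univ.filter fun j : Fin m =>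
      (Finset.univ.filter fun i : Fin m => x i < x j).card < k).card := by
  set σ := Tuple.sort x with hσ
  have hmono : Monotone (x ∘ σ) := Tuple.monotone_sort x
  have hinj : Function.Injective (fun i : Fin k => σ (Fin.castLE hk i)) :=
    σ.injective.comp (Fin.castLE_injective hk)
  calc k = ((Finset.univ : Finset (Fin k)).image fun i => σ (Fin.castLE hk i)).card := by
        rw [Finset.card_image_of_injective _ hinj, Finset.card_univ, Fintype.card_fin]
    _ ≤ _ := by
        apply Finset.card_le_card
        intro j hj
        simp only [Finset.mem_image, Finset.mem_univ, true_and] at hj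
        obtain ⟨i, rfl⟩ := hj
        simp only [Finset.mem_filter, Finset.mem_univ, true_and]
        rw [← card_filter_perm σ (fun l => x l < x (σ (Fin.castLE hk i)))]
        calc (Finset.univ.filter fun l : Fin m => x (σ l) < x (σ (Fin.castLE hk i))).card
            ≤ (Finset.Iio (Fin.castLE hk i)).card := by
              apply Finset.card_le_card
              intro l hl
              simp only [Finset.mem_filter, Finset.mem_univ, true_and] at hl
              simp only [Finset.mem_Iio]
              by_contra hge
              push_neg at hge
              exact absurd (hmono hge) (not_le.mpr hl)
          _ = (Fin.castLE hk i : ℕ) := by simp [Fin.card_Iio]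
          _ < k := i.isLt

lemma sorted_getD_of_countP {l : List ℝ} (hl : l.Pairwise (· ≤ ·)) {k : ℕ} (hk1 : 1 ≤ k)
    (hkn : k ≤ l.length) {t : ℝ} (h : l.countP (fun a => decide (a < t)) ≤ k - 1) :
    t ≤ l.getD (k - 1) 0 := by
  by_contra hlt
  push_neg at hlt
  have hklt : k - 1 < l.length := by omega
  rw [List.getD_eq_getElem l 0 hklt] at hlt
  have : k ≤ l.countP (fun a => decide (a < t)) := by
    calc k = (l.take k).length := by rw [List.length_take]; omega
    _ = (l.take k).countP (fun a => decide (a < t)) := by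
        refine (List.countP_eq_length.mpr ?_).symm
        intro a ha
        rw [List.mem_take_iff_getElem] at ha
        obtain ⟨i, hi, rfl⟩ := ha
        simp only [decide_eq_true_eq]
        exact lt_of_le_of_lt (hl.rel_get_of_le (by simp; omega : (⟨i, _⟩ : Fin l.length) ≤ ⟨k-1, hklt⟩)) hlt
    _ ≤ l.countP (fun a => decide (a < t)) := (List.take_sublist k l).countP_le
  omega

/-- Split conformal calibration guarantee: if `V₁,…,Vₙ,V` are exchangeable and `q̂` is the
`⌈(1−α)(n+1)⌉`-th smallest of `V₁,…,Vₙ` (with `q̂ = +∞`, i.e. the coverage event trivially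
holds, when `⌈(1−α)(n+1)⌉ > n`), then `P(V ≤ q̂) ≥ 1 − α`. -/
theorem split_conformal_coverage
    {Ω : Type*} [MeasureSpace Ω] [IsProbabilityMeasure (ℙ : Measure Ω)]
    (n : ℕ) (V : Fin (n + 1) → Ω → ℝ) (hV : ∀ i, Measurable (V i))
    (hexch : ∀ π : Equiv.Perm (Fin (n + 1)),
      Measure.map (fun ω i => V (π i) ω) ℙ = Measure.map (fun ω i => V i ω) ℙ)
    (α : ℝ) (hα : α ∈ Set.Ioo (0 : ℝ) 1)
    (k : ℕ) (hk : k = ⌈(1 - α) * (n + 1 : ℝ)⌉₊) :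
    1 - α ≤ (ℙ {ω | k ≤ n → V (Fin.last n) ω ≤
      ((Multiset.map (fun i : Fin n => V i.castSucc ω) Finset.univ.val).sort
        (· ≤ ·)).getD (k - 1) 0}).toReal := by
  obtain ⟨hα0, hα1⟩ := hα
  -- basic facts about k
  have hpos : (0:ℝ) < (1 - α) * (n + 1 : ℝ) := by
    have h1α : (0:ℝ) < 1 - α := by linarith
    positivity
  have hk1 : 1 ≤ k := by rw [hk]; exact Nat.ceil_pos.mpr hpos
  have hkn1 : k ≤ n + 1 := by
    rw [hk]
    refine Nat.ceil_le.mpr ?_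
    push_cast
    nlinarith
  have hkreal : (1 - α) * (n + 1 : ℝ) ≤ k := by rw [hk]; exact Nat.le_ceil _
  -- the event set
  set E : Set Ω := {ω | k ≤ n → V (Fin.last n) ω ≤
      ((Multiset.map (fun i : Fin n => V i.castSucc ω) Finset.univ.val).sort
        (· ≤ ·)).getD (k - 1) 0} with hE
  -- the rank events
  set A : Fin (n+1) → Set Ω := fun j =>
    {ω | (Finset.univ.filter fun i => V i ω < V j ω).card < k} with hA
  have hAmeas : ∀ j, MeasurableSet (A j) := by
    intro j
    have : Measurable fun ω => (Finset.univ.filter fun i => V i ω < V j ω).card := by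
      simp only [Finset.card_filter]
      exact Finset.measurable_sum _ fun i _ =>
        Measurable.ite (measurableSet_lt (hV i) (hV j)) measurable_const measurable_const
    exact this (MeasurableSet.of_discrete (s := {m : ℕ | m < k}))
  -- equal probabilities by exchangeability
  have hBmeas : MeasurableSet {x : Fin (n+1) → ℝ |
      (Finset.univ.filter fun i => x i < x (Fin.last n)).card < k} := by
    have : Measurable fun x : Fin (n+1) → ℝ =>
        (Finset.univ.filter fun i => x i < x (Fin.last n)).card := by
      simp only [Finset.card_filter]
      exact Finset.measurable_sum _ fun i _ =>
        Measurable.ite (measurableSet_lt (measurable_pi_apply i) (measurable_pi_apply _))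
          measurable_const measurable_const
    exact this (MeasurableSet.of_discrete (s := {m : ℕ | m < k}))
  have hmeasmap : ∀ π : Equiv.Perm (Fin (n+1)),
      Measurable (fun ω i => V (π i) ω) := fun π =>
    measurable_pi_lambda _ fun i => hV (π i)
  have hAeq : ∀ j, ℙ (A j) = ℙ (A (Fin.last n)) := by
    intro j
    set π := Equiv.swap (Fin.last n) j with hπ
    have h1 := hexch π
    have h2 : ℙ ((fun ω i => V (π i) ω) ⁻¹' {x : Fin (n+1) → ℝ |
        (Finset.univ.filter fun i => x i < x (Fin.last n)).card < k})
        = ℙ ((fun ω i => V i ω) ⁻¹' {x : Fin (n+1) → ℝ |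
        (Finset.univ.filter fun i => x i < x (Fin.last n)).card < k}) := by
      rw [← Measure.map_apply (hmeasmap π) hBmeas,
        ← Measure.map_apply (measurable_pi_lambda _ fun i => hV i) hBmeas, h1]
    have e1 : (fun ω i => V (π i) ω) ⁻¹' {x : Fin (n+1) → ℝ |
        (Finset.univ.filter fun i => x i < x (Fin.last n)).card < k} = A j := by
      ext ω
      simp only [Set.mem_preimage, Set.mem_setOf_eq, hA]
      rw [card_filter_perm π (fun i => V i ω < V (π (Fin.last n)) ω), hπ,
        Equiv.swap_apply_left]
    have e2 : (fun ω i => V i ω) ⁻¹' {x : Fin (n+1) → ℝ |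
        (Finset.univ.filter fun i => x i < x (Fin.last n)).card < k} = A (Fin.last n) := by
      ext ω; simp [hA]
    rw [← e1, ← e2] at *
    exact h2
  -- counting bound: k ≤ (n+1) ℙ (A last)
  have hsum : (k : ENNReal) ≤ (n + 1) * ℙ (A (Fin.last n)) := by
    have hpoint : ∀ ω, (k : ENNReal) ≤ ∑ j : Fin (n+1), (A j).indicator (fun _ => 1) ω := by
      intro ω
      have := rank_count_lemma (fun i => V i ω) hkn1
      calc (k : ENNReal) ≤ ((Finset.univ.filter fun j : Fin (n+1) =>
            (Finset.univ.filter fun i => V i ω < V j ω).card < k).card : ENNReal) := by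
            exact_mod_cast this
        _ = ∑ j : Fin (n+1), (A j).indicator (fun _ => 1) ω := by
            rw [Finset.card_filter]
            push_cast
            refine Finset.sum_congr rfl fun j _ => ?_
            rw [Set.indicator_apply]
            simp only [hA, Set.mem_setOf_eq]
    calc (k : ENNReal) = ∫⁻ _, (k : ENNReal) ∂ℙ := by simp
      _ ≤ ∫⁻ ω, ∑ j : Fin (n+1), (A j).indicator (fun _ => 1) ω ∂ℙ :=
          lintegral_mono hpoint
      _ = ∑ j : Fin (n+1), ∫⁻ ω, (A j).indicator (fun _ => 1) ω ∂ℙ :=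
          lintegral_finset_sum _ fun j _ =>
            (measurable_const.indicator (hAmeas j))
      _ = ∑ j : Fin (n+1), ℙ (A j) := by
          refine Finset.sum_congr rfl fun j _ => ?_
          rw [lintegral_indicator_const (hAmeas j), one_mul]
      _ = (n + 1) * ℙ (A (Fin.last n)) := by
          rw [Finset.sum_congr rfl fun j _ => hAeq j]
          simp [Finset.card_univ, mul_comm]
  -- A last ⊆ E
  have hsub : A (Fin.last n) ⊆ E := by
    intro ω hω
    simp only [hA, Set.mem_setOf_eq] at hω
    intro hkle
    set t := V (Fin.last n) ω with ht
    set M := Multiset.map (fun i : Fin n => V i.castSucc ω) Finset.univ.val with hM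
    have hlen : (M.sort (· ≤ ·)).length = n := by
      rw [Multiset.length_sort, hM, Multiset.card_map]
      simp
    have hcount : (M.sort (· ≤ ·)).countP (fun a => decide (a < t)) ≤ k - 1 := by
      have hc1 : (M.sort (· ≤ ·)).countP (fun a => decide (a < t))
          = Multiset.countP (fun a => a < t) M := by
        rw [← Multiset.coe_countP, Multiset.sort_eq]
      have hc2 : Multiset.countP (fun a => a < t) M
          = (Finset.univ.filter fun i : Fin n => V i.castSucc ω < t).card := by
        rw [hM, Multiset.countP_map]
        rfl
      have hc3 : (Finset.univ.filter fun i : Fin n => V i.castSucc ω < t).card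
          = (Finset.univ.filter fun i : Fin (n+1) => V i ω < t).card := by
        refine Finset.card_nbij (i := Fin.castSucc) ?_ ?_ ?_
        · intro i hi
          simp only [Finset.coe_filter, Set.mem_setOf_eq, Finset.mem_univ, true_and,
            Finset.mem_coe, Finset.mem_filter] at hi ⊢
          exact hi
        · exact Set.injOn_of_injective (Fin.castSucc_injective n)
        · intro i hi
          simp only [Finset.coe_filter, Set.mem_setOf_eq, Finset.mem_univ, true_and,
            Set.mem_image] at hi ⊢
          have hne : i ≠ Fin.last n := by
            rintro rfl
            exact absurd hi (lt_irrefl t)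
          obtain ⟨j, rfl⟩ := Fin.exists_castSucc_eq.mpr hne
          exact ⟨j, hi, rfl⟩
      rw [hc1, hc2, hc3]
      omega
    exact sorted_getD_of_countP (Multiset.pairwise_sort _ _) hk1 (by omega) hcount
  -- put it together
  have hfin : ℙ (A (Fin.last n)) ≠ ⊤ := measure_ne_top _ _
  have hreal : (k : ℝ) ≤ (n + 1) * (ℙ (A (Fin.last n))).toReal := by
    have := ENNReal.toReal_mono (by finiteness) hsum
    rw [ENNReal.toReal_mul] at this
    simpa [ENNReal.toReal_add] using this
  have hlast : 1 - α ≤ (ℙ (A (Fin.last n))).toReal := by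
    have hn1 : (0:ℝ) < (n + 1 : ℝ) := by positivity
    nlinarith [hkreal]
  calc 1 - α ≤ (ℙ (A (Fin.last n))).toReal := hlast
    _ ≤ (ℙ E).toReal := by
      apply ENNReal.toReal_mono (measure_ne_top _ _)
      exact measure_mono hsub
end

section
/- Let V₁,…,Vₙ, V_{n+1} be i.i.d. with a continuous distribution and q̂ the ⌈(1−α)(n+1)⌉-th order statistic of V₁,…,Vₙ with ⌈(1−α)(n+1)⌉ ≤ n. Then P(V_{n+1} ≤ q̂) ≤ 1 − α + 1/(n+1). -/
open MeasureTheory ProbabilityTheory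

lemma list_countP_lt_of_le_sorted (l : List ℝ) (hl : l.Pairwise (· ≤ ·)) (k : ℕ)
    (hk1 : 1 ≤ k) (hkl : k ≤ l.length) (y : ℝ) (hy : y ≤ l.getD (k-1) 0) :
    l.countP (fun z => decide (z < y)) ≤ k - 1 := by
  have hlen : k - 1 < l.length := by omega
  have hsplit : l = l.take (k-1) ++ l.drop (k-1) := (List.take_append_drop _ _).symm
  have hdrop : l.drop (k-1) = l[k-1] :: l.drop k := by
    have h1 : k - 1 + 1 = k := by omega
    rw [List.drop_eq_getElem_cons hlen, h1]
  have hget : l.getD (k-1) 0 = l[k-1] := List.getD_eq_getElem l 0 hlen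
  have hzero : (l.drop (k-1)).countP (fun z => decide (z < y)) = 0 := by
    rw [List.countP_eq_zero]
    intro a ha
    have hsorted : (l.drop (k-1)).Pairwise (· ≤ ·) := hl.sublist (List.drop_sublist _ _)
    rw [hdrop] at hsorted ha
    have : l[k-1] ≤ a := by
      rcases List.mem_cons.1 ha with h | h
      · exact h ▸ le_refl _
      · exact (List.pairwise_cons.1 hsorted).1 a h
    simp only [decide_eq_true_eq]
    push_neg
    exact le_trans (hget ▸ hy) this
  calc l.countP (fun z => decide (z < y))
      = (l.take (k-1)).countP _ + (l.drop (k-1)).countP _ := by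
        conv_lhs => rw [hsplit]
        rw [List.countP_append]
    _ ≤ (k-1) + 0 := by
        rw [hzero]
        exact Nat.add_le_add_right (le_trans (List.countP_le_length) (by simp [List.length_take])) 0
    _ = k - 1 := by omega

open MeasureTheory ProbabilityTheory

lemma count_lt_of_le_orderstat {n : ℕ} (x : Fin n → ℝ) (k : ℕ) (hk1 : 1 ≤ k) (hkn : k ≤ n)
    (y : ℝ) (hy : y ≤ ((Multiset.map x Finset.univ.val).sort (· ≤ ·)).getD (k - 1) 0) :
    (Finset.univ.filter (fun i : Fin n => x i < y)).card < k := by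
  classical
  set m : Multiset ℝ := Multiset.map x Finset.univ.val with hm
  set l : List ℝ := m.sort (· ≤ ·) with hl
  have hlen : l.length = n := by
    rw [hl, Multiset.length_sort, hm, Multiset.card_map]
    simp
  have hsorted : l.Pairwise (· ≤ ·) := Multiset.pairwise_sort _ _
  have key := list_countP_lt_of_le_sorted l hsorted k hk1 (by omega) y hy
  have hcount : (Finset.univ.filter (fun i : Fin n => x i < y)).card
      = l.countP (fun z => decide (z < y)) := by
    have h1 : (Finset.univ.filter (fun i : Fin n => x i < y)).card
        = Multiset.countP (fun z => z < y) m := by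
      rw [hm, Multiset.countP_map]
      rfl
    rw [h1]
    have : (l : Multiset ℝ) = m := Multiset.sort_eq _ _
    rw [← this, Multiset.coe_countP]
  omega
open MeasureTheory ProbabilityTheory

lemma rank_card_eq {n : ℕ} (x : Fin (n+1) → ℝ) (hx : Function.Injective x)
    (k : ℕ) (hkn : k ≤ n + 1) :
    (Finset.univ.filter (fun j : Fin (n+1) =>
      (Finset.univ.filter (fun i : Fin (n+1) => x i < x j)).card < k)).card = k := by
  classical
  set c : Fin (n+1) → ℕ := fun j => (Finset.univ.filter (fun i => x i < x j)).card with hc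
  have hmono : ∀ j j', x j < x j' → c j < c j' := by
    intro j j' hlt
    apply Finset.card_lt_card
    constructor
    · intro i hi
      simp only [Finset.mem_filter, Finset.mem_univ, true_and] at hi ⊢
      exact lt_trans hi hlt
    · intro hsub
      have : j ∈ Finset.univ.filter (fun i => x i < x j') := by
        simp [hlt]
      have := hsub this
      simp at this
  have hinj : Function.Injective c := by
    intro j j' h
    by_contra hne
    rcases lt_trichotomy (x j) (x j') with h1 | h1 | h1
    · exact absurd h (Nat.ne_of_lt (hmono _ _ h1))
    · exact hne (hx h1)
    · exact absurd h.symm (Nat.ne_of_lt (hmono _ _ h1))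
  have hle : ∀ j, c j ≤ n := by
    intro j
    have : Finset.univ.filter (fun i => x i < x j) ⊆ Finset.univ.erase j := by
      intro i hi
      simp only [Finset.mem_filter, Finset.mem_univ, true_and] at hi
      simp only [Finset.mem_erase, Finset.mem_univ, and_true]
      intro h; exact absurd hi (h ▸ lt_irrefl _)
    calc c j ≤ (Finset.univ.erase j).card := Finset.card_le_card this
      _ = n := by rw [Finset.card_erase_of_mem (Finset.mem_univ _)]; simp
  have himg : Finset.univ.image c = Finset.range (n+1) := by
    apply Finset.eq_of_subset_of_card_le
    · intro m hm
      simp only [Finset.mem_image] at hm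
      obtain ⟨j, _, rfl⟩ := hm
      simp only [Finset.mem_range]
      exact Nat.lt_succ_of_le (hle j)
    · rw [Finset.card_range, Finset.card_image_of_injective _ hinj]
      simp
  calc (Finset.univ.filter (fun j => c j < k)).card
      = ((Finset.univ.filter (fun j => c j < k)).image c).card :=
        (Finset.card_image_of_injective _ hinj).symm
    _ = ((Finset.univ.image c).filter (fun m => m < k)).card := by
        rw [Finset.filter_image]
    _ = ((Finset.range (n+1)).filter (fun m => m < k)).card := by rw [himg]
    _ = k := by
        have : (Finset.range (n+1)).filter (fun m => m < k) = Finset.range k := by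
          ext m
          simp only [Finset.mem_filter, Finset.mem_range]
          omega
        rw [this, Finset.card_range]
open MeasureTheory ProbabilityTheory

lemma filter_card_comp_equiv {α : Type*} [Fintype α] [DecidableEq α] (e : α ≃ α)
    (p : α → Prop) [DecidablePred p] :
    (Finset.univ.filter fun i => p (e i)).card = (Finset.univ.filter p).card := by
  rw [← Finset.card_image_of_injective (Finset.univ.filter fun i => p (e i)) e.injective]
  congr 1
  ext a
  simp only [Finset.mem_image, Finset.mem_filter, Finset.mem_univ, true_and]
  constructor
  · rintro ⟨i, hi, rfl⟩; exact hi
  · intro ha; exact ⟨e.symm a, by simpa using ha, by simp⟩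

lemma castSucc_count_eq {n : ℕ} (x : Fin (n+1) → ℝ) (y : ℝ) :
    (Finset.univ.filter fun i : Fin (n+1) => x i < x (Fin.last n)).card
      = (Finset.univ.filter fun i : Fin n => x i.castSucc < x (Fin.last n)).card := by
  rw [← Finset.card_image_of_injective (Finset.univ.filter fun i : Fin n =>
    x i.castSucc < x (Fin.last n)) (Fin.castSucc_injective n)]
  congr 1
  ext a
  simp only [Finset.mem_image, Finset.mem_filter, Finset.mem_univ, true_and]
  constructor
  · intro ha
    have hne : a ≠ Fin.last n := by
      rintro rfl; exact lt_irrefl _ ha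
    obtain ⟨i, rfl⟩ := Fin.exists_castSucc_eq.mpr hne
    exact ⟨i, ha, rfl⟩
  · rintro ⟨i, hi, rfl⟩; exact hi

lemma measurable_rank_count {n : ℕ} (j : Fin (n+1)) :
    Measurable fun x : Fin (n+1) → ℝ =>
      (Finset.univ.filter fun i : Fin (n+1) => x i < x j).card := by
  have : (fun x : Fin (n+1) → ℝ =>
      (Finset.univ.filter fun i : Fin (n+1) => x i < x j).card)
      = fun x => ∑ i : Fin (n+1), if x i < x j then 1 else 0 := by
    funext x
    rw [Finset.card_filter]
  rw [this]
  apply Finset.measurable_sum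
  intro i _
  exact Measurable.ite (measurableSet_lt (measurable_pi_apply i) (measurable_pi_apply j))
    measurable_const measurable_const

lemma measurableSet_rank_lt {n : ℕ} (j : Fin (n+1)) (k : ℕ) :
    MeasurableSet {x : Fin (n+1) → ℝ |
      (Finset.univ.filter fun i : Fin (n+1) => x i < x j).card < k} :=
  measurable_rank_count j (show MeasurableSet {m : ℕ | m < k} from trivial)
open MeasureTheory ProbabilityTheory

lemma map_fun_eq_pi {Ω : Type*} [MeasureSpace Ω] [IsProbabilityMeasure (ℙ : Measure Ω)]
    {n : ℕ} (V : Fin n → Ω → ℝ) (hV : ∀ i, Measurable (V i))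
    (hindep : iIndepFun V ℙ)
    (μ : Measure ℝ) [IsProbabilityMeasure μ] (hid : ∀ i, Measure.map (V i) ℙ = μ) :
    Measure.map (fun ω (i : Fin n) => V i ω) ℙ = Measure.pi (fun _ => μ) := by
  have hT : Measurable (fun ω (i : Fin n) => V i ω) :=
    measurable_pi_iff.mpr fun i => hV i
  refine (Measure.pi_eq (μ := fun _ : Fin n => μ) fun s hs => ?_).symm
  rw [Measure.map_apply hT (MeasurableSet.univ_pi hs)]
  have hpre : (fun ω (i : Fin n) => V i ω) ⁻¹' Set.univ.pi s
      = ⋂ i ∈ Finset.univ, V i ⁻¹' s i := by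
    ext ω
    simp [Set.mem_pi]
  rw [hpre, hindep.measure_inter_preimage_eq_mul Finset.univ (fun i _ => hs i)]
  refine Finset.prod_congr rfl fun i _ => ?_
  rw [← Measure.map_apply (hV i) (hs i), hid i]
open MeasureTheory ProbabilityTheory

lemma pi_rank_measure {n k : ℕ} (hk : k ≤ n + 1) (μ : Measure ℝ) [IsProbabilityMeasure μ]
    (hties : Measure.pi (fun _ : Fin (n+1) => μ) {x | ¬ Function.Injective x} = 0) :
    Measure.pi (fun _ : Fin (n+1) => μ)
      {x | (Finset.univ.filter fun i : Fin (n+1) => x i < x (Fin.last n)).card < k}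
      = (k : ENNReal) / (n + 1) := by
  classical
  set π : Measure (Fin (n+1) → ℝ) := Measure.pi (fun _ => μ) with hπ
  set B : Fin (n+1) → Set (Fin (n+1) → ℝ) := fun j =>
    {x | (Finset.univ.filter fun i : Fin (n+1) => x i < x j).card < k} with hB
  have hBmeas : ∀ j, MeasurableSet (B j) := fun j => measurableSet_rank_lt j k
  -- symmetry: all B j have the same measure
  have hswap : ∀ j, π (B j) = π (B (Fin.last n)) := by
    intro j
    set f : Fin (n+1) ≃ Fin (n+1) := Equiv.swap j (Fin.last n) with hf
    have hmp : MeasurePreserving (MeasurableEquiv.piCongrLeft (fun _ => ℝ) f) π π :=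
      measurePreserving_piCongrLeft (fun _ => μ) f
    have hpre : (MeasurableEquiv.piCongrLeft (fun _ => ℝ) f) ⁻¹' (B (Fin.last n)) = B j := by
      ext x
      have happ : (MeasurableEquiv.piCongrLeft (fun _ => ℝ) f) x = fun i => x (f.symm i) := by
        funext i
        have := MeasurableEquiv.piCongrLeft_apply_apply (β := fun _ => ℝ) f x (f.symm i)
        simpa using this
      simp only [Set.mem_preimage, hB, Set.mem_setOf_eq, happ]
      have h1 : f.symm = f := by rw [hf]; exact Equiv.symm_swap j (Fin.last n)
      rw [h1]
      have h2 : f (Fin.last n) = j := by rw [hf]; simp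
      simp only [h2]
      have h3 : (Finset.univ.filter fun i : Fin (n+1) => x (f i) < x j).card
          = (Finset.univ.filter fun i : Fin (n+1) => x i < x j).card :=
        filter_card_comp_equiv f (fun i => x i < x j)
      rw [h3]
    rw [← hpre]
    exact hmp.measure_preimage (hBmeas (Fin.last n)).nullMeasurableSet
  -- sum of the measures equals k
  have hsum : ∑ j : Fin (n+1), π (B j) = (k : ENNReal) := by
    have h1 : ∀ j, π (B j) = ∫⁻ x, (B j).indicator (fun _ => (1 : ENNReal)) x ∂π := by
      intro j
      exact (lintegral_indicator_one (hBmeas j)).symm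
    simp_rw [h1]
    rw [← lintegral_finset_sum _ (fun j _ =>
      (measurable_const.indicator (hBmeas j)))]
    have hae : ∀ᵐ x ∂π, (∑ j : Fin (n+1), (B j).indicator (fun _ => (1 : ENNReal)) x)
        = (k : ENNReal) := by
      have : ∀ᵐ x ∂π, Function.Injective x := by
        rw [← MeasureTheory.ae_iff] at hties
        simpa using hties
      filter_upwards [this] with x hx
      have hpoint : (∑ j : Fin (n+1), (B j).indicator (fun _ => (1 : ENNReal)) x)
          = ((Finset.univ.filter fun j : Fin (n+1) =>
              (Finset.univ.filter fun i : Fin (n+1) => x i < x j).card < k).card : ENNReal) := by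
        rw [Finset.card_filter, Nat.cast_sum]
        refine Finset.sum_congr rfl fun j _ => ?_
        by_cases hj : x ∈ B j
        · simp only [Set.indicator_of_mem hj]
          have : (Finset.univ.filter fun i : Fin (n+1) => x i < x j).card < k := hj
          simp [this]
        · simp only [Set.indicator_of_notMem hj]
          have : ¬ (Finset.univ.filter fun i : Fin (n+1) => x i < x j).card < k := hj
          simp [this]
      rw [hpoint, rank_card_eq x hx k hk]
    rw [lintegral_congr_ae hae, lintegral_const]
    simp
  have hcard : ∑ j : Fin (n+1), π (B j) = ((n+1 : ℕ) : ENNReal) * π (B (Fin.last n)) := by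
    calc ∑ j : Fin (n+1), π (B j) = ∑ _j : Fin (n+1), π (B (Fin.last n)) :=
          Finset.sum_congr rfl fun j _ => hswap j
      _ = ((n+1 : ℕ) : ENNReal) * π (B (Fin.last n)) := by
          rw [Finset.sum_const, Finset.card_univ, Fintype.card_fin, nsmul_eq_mul]
  have hfinal : ((n+1 : ℕ) : ENNReal) * π (B (Fin.last n)) = (k : ENNReal) := by
    rw [← hcard, hsum]
  have hn0 : ((n+1 : ℕ) : ENNReal) ≠ 0 := by simp
  have hntop : ((n+1 : ℕ) : ENNReal) ≠ ⊤ := by simp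
  have hfin := (ENNReal.eq_div_iff hn0 hntop).mpr hfinal
  show π (B (Fin.last n)) = _
  rw [hfin]
  push_cast
  ring
open MeasureTheory ProbabilityTheory

/-- Upper bound for conformal coverage: for i.i.d. scores with a continuous (atomless)
distribution and `q̂` the `⌈(1−α)(n+1)⌉`-th order statistic of the first `n` scores
(with `⌈(1−α)(n+1)⌉ ≤ n`), `P(V_{n+1} ≤ q̂) ≤ 1 − α + 1/(n+1)`. -/
theorem split_conformal_coverage_upper
    {Ω : Type*} [MeasureSpace Ω] [IsProbabilityMeasure (ℙ : Measure Ω)]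
    (n : ℕ) (V : Fin (n + 1) → Ω → ℝ) (hV : ∀ i, Measurable (V i))
    (hindep : iIndepFun V ℙ)
    (μ : Measure ℝ) (hid : ∀ i, Measure.map (V i) ℙ = μ)
    (hatomless : ∀ x : ℝ, μ {x} = 0)
    (α : ℝ) (hα : α ∈ Set.Ioo (0 : ℝ) 1)
    (k : ℕ) (hk : k = ⌈(1 - α) * (n + 1 : ℝ)⌉₊) (hkn : k ≤ n) :
    (ℙ {ω | V (Fin.last n) ω ≤
      ((Multiset.map (fun i : Fin n => V i.castSucc ω) Finset.univ.val).sort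
        (· ≤ ·)).getD (k - 1) 0}).toReal ≤ 1 - α + 1 / (n + 1) := by
  classical
  obtain ⟨hα0, hα1⟩ := hα
  haveI : IsProbabilityMeasure μ := by
    rw [← hid 0]; exact Measure.isProbabilityMeasure_map (hV 0).aemeasurable
  have hk1 : 1 ≤ k := by
    rw [hk]
    refine Nat.one_le_iff_ne_zero.mpr (Nat.pos_iff_ne_zero.mp (Nat.ceil_pos.mpr ?_))
    have h1 : (0:ℝ) < 1 - α := by linarith
    have h2 : (0:ℝ) < (n:ℝ) + 1 := by positivity
    exact mul_pos h1 h2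
  -- the joint law
  set T : Ω → (Fin (n+1) → ℝ) := fun ω i => V i ω with hT
  have hTmeas : Measurable T := measurable_pi_iff.mpr fun i => hV i
  set π : Measure (Fin (n+1) → ℝ) := Measure.pi (fun _ : Fin (n+1) => μ) with hπ
  have hmap : Measure.map T ℙ = π := map_fun_eq_pi V hV hindep μ hid
  -- pairwise no ties
  have hpair : ∀ i j : Fin (n+1), i ≠ j → ℙ {ω | V i ω = V j ω} = 0 := by
    intro i j hij
    have hind := hindep.indepFun hij
    have hprod := (indepFun_iff_map_prod_eq_prod_map_map (hV i).aemeasurable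
      (hV j).aemeasurable).1 hind
    rw [hid i, hid j] at hprod
    have hD2 : MeasurableSet {p : ℝ × ℝ | p.1 = p.2} :=
      measurableSet_eq_fun measurable_fst measurable_snd
    have hpre : {ω | V i ω = V j ω}
        = (fun ω => (V i ω, V j ω)) ⁻¹' {p : ℝ × ℝ | p.1 = p.2} := rfl
    rw [hpre, ← Measure.map_apply ((hV i).prodMk (hV j)) hD2, hprod]
    rw [Measure.measure_prod_null hD2]
    refine Filter.Eventually.of_forall fun a => ?_
    show μ (Prod.mk a ⁻¹' {p : ℝ × ℝ | p.1 = p.2}) = 0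
    have : (Prod.mk a ⁻¹' {p : ℝ × ℝ | p.1 = p.2}) = {a} := by
      ext b; simp [eq_comm]
    rw [this, hatomless a]
  -- ties are null in the product space
  have hties : π {x : Fin (n+1) → ℝ | ¬ Function.Injective x} = 0 := by
    have hsub : {x : Fin (n+1) → ℝ | ¬ Function.Injective x}
        ⊆ ⋃ (i : Fin (n+1)) (j : Fin (n+1)) (_ : i ≠ j), {x | x i = x j} := by
      intro x hx
      simp only [Set.mem_setOf_eq, Function.Injective] at hx
      push_neg at hx
      obtain ⟨i, j, hxy, hij⟩ := hx
      exact Set.mem_iUnion.mpr ⟨i, Set.mem_iUnion.mpr ⟨j, Set.mem_iUnion.mpr ⟨hij, hxy⟩⟩⟩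
    refine measure_mono_null hsub ?_
    refine measure_iUnion_null fun i => measure_iUnion_null fun j => ?_
    by_cases hij : i = j
    · simp [hij]
    · have hDm : MeasurableSet {x : Fin (n+1) → ℝ | x i = x j} :=
        measurableSet_eq_fun (measurable_pi_apply i) (measurable_pi_apply j)
      have : (⋃ (_ : i ≠ j), {x : Fin (n+1) → ℝ | x i = x j})
          = {x : Fin (n+1) → ℝ | x i = x j} := by
        simp [hij]
      rw [this, ← hmap, Measure.map_apply hTmeas hDm]
      exact hpair i j hij
  -- the key measure computation
  have hkey : π {x : Fin (n+1) → ℝ |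
      (Finset.univ.filter fun i : Fin (n+1) => x i < x (Fin.last n)).card < k}
      = (k : ENNReal) / (n + 1) := pi_rank_measure (by omega) μ hties
  -- event inclusion
  have hsub : {ω | V (Fin.last n) ω ≤
      ((Multiset.map (fun i : Fin n => V i.castSucc ω) Finset.univ.val).sort
        (· ≤ ·)).getD (k - 1) 0}
      ⊆ T ⁻¹' {x : Fin (n+1) → ℝ |
        (Finset.univ.filter fun i : Fin (n+1) => x i < x (Fin.last n)).card < k} := by
    intro ω hω
    simp only [Set.mem_setOf_eq] at hω
    have hcount := count_lt_of_le_orderstat (fun i : Fin n => V i.castSucc ω) k hk1 hkn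
      (V (Fin.last n) ω) hω
    simp only [Set.mem_preimage, Set.mem_setOf_eq]
    rw [castSucc_count_eq (T ω) 0]
    exact hcount
  -- put it together
  have hle : ℙ {ω | V (Fin.last n) ω ≤
      ((Multiset.map (fun i : Fin n => V i.castSucc ω) Finset.univ.val).sort
        (· ≤ ·)).getD (k - 1) 0} ≤ (k : ENNReal) / (n + 1) := by
    calc ℙ _ ≤ ℙ (T ⁻¹' {x : Fin (n+1) → ℝ |
          (Finset.univ.filter fun i : Fin (n+1) => x i < x (Fin.last n)).card < k}) :=
          measure_mono hsub
      _ = π {x : Fin (n+1) → ℝ |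
          (Finset.univ.filter fun i : Fin (n+1) => x i < x (Fin.last n)).card < k} := by
          rw [← hmap, Measure.map_apply hTmeas (measurableSet_rank_lt (Fin.last n) k)]
      _ = (k : ENNReal) / (n + 1) := hkey
  have htop : ((k : ENNReal) / (n + 1)) ≠ ⊤ := by
    exact ne_of_lt (ENNReal.div_lt_top (by simp) (by simp))
  have hreal : ((k : ENNReal) / (n + 1)).toReal = (k : ℝ) / (n + 1) := by
    have hcast : ((n : ENNReal) + 1) = ((n+1 : ℕ) : ENNReal) := by push_cast; ring
    rw [ENNReal.toReal_div, hcast, ENNReal.toReal_natCast, ENNReal.toReal_natCast]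
    push_cast
    ring
  have h1 := ENNReal.toReal_mono htop hle
  rw [hreal] at h1
  refine le_trans h1 ?_
  have hnpos : (0 : ℝ) < (n : ℝ) + 1 := by positivity
  have hceil : (k : ℝ) < (1 - α) * (n + 1) + 1 := by
    rw [hk]
    refine Nat.ceil_lt_add_one ?_
    have h1 : (0:ℝ) ≤ 1 - α := by linarith
    have h2 : (0:ℝ) ≤ (n:ℝ) + 1 := by positivity
    exact mul_nonneg h1 h2
  rw [div_le_iff₀ hnpos]
  have h2 : ((1:ℝ) - α + 1/((n:ℝ)+1)) * ((n:ℝ)+1) = (1-α)*((n:ℝ)+1) + 1 := by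
    field_simp
  rw [h2]
  linarith
end
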